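/- There exists a constant C > 0 such that for all ξ ≥ 2 and all w ∈ (−1,1) one has |Φ(ξ,w) − E(ξ,w)| ≤ C·ξ⁻², where Φ(ξ,w) = ∫_ξ^∞ ∫_{−1}^{1} Φ₀(η,w,z) dz dη, and E(ξ,w) = (3/(2π²))·(1 − u)²·ξ⁻¹ if u = ξ(1−|w|) < 1, and E(ξ,w) = 0 otherwise. -/

import Mathlib

open Real Set MeasureTheory

noncomputable def Υ (x : ℝ) : ℝ := if x ≤ 0 then 0 else if x < 1 then x else 1

noncomputable def Φ₀ (ξ w z : ℝ) : ℝ :=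
  if w + z ≠ 0 then (6 / π ^ 2) * Υ (1 + (ξ⁻¹ - max |w| |z| - 1) / |w + z|)
  else if ξ⁻¹ < 1 + |w| then 0 else 6 / π ^ 2

lemma upsilon_max {x : ℝ} (h : x < 1) : Υ x = max x 0 := by
  unfold Υ
  rcases le_or_gt x 0 with h0 | h0
  · rw [if_pos h0, max_eq_right h0]
  · rw [if_neg (not_le.mpr h0), if_pos h, max_eq_left h0.le]

lemma phi0_zero {η w z : ℝ} (hε : η⁻¹ ≤ 1/2) (hw0 : 0 ≤ w) (hz : z ≤ 1 - η⁻¹) :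
    Φ₀ η w z = 0 := by
  unfold Φ₀
  rcases eq_or_ne (w + z) 0 with h0 | h0
  · rw [if_neg (by simpa using h0), if_pos]
    have := abs_nonneg w
    linarith
  · rw [if_pos h0]
    have habs : 0 < |w + z| := abs_pos.mpr h0
    have key : |w + z| ≤ 1 + max |w| |z| - η⁻¹ := by
      rcases le_or_gt 0 z with hz0 | hz0
      · rw [abs_of_nonneg (by linarith), abs_of_nonneg hw0, abs_of_nonneg hz0]
        rcases le_total w z with h | h
        · rw [max_eq_right h]; linarith
        · rw [max_eq_left h]; linarith
      · have h1 : |z| = -z := abs_of_neg hz0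
        have h2 : |w| = w := abs_of_nonneg hw0
        have h3 : |w + z| ≤ max |w| |z| := by
          rw [abs_le]
          constructor
          · have := le_max_right |w| |z|; linarith
          · have := le_max_left |w| |z|; linarith
        linarith
    have harg : 1 + (η⁻¹ - max |w| |z| - 1) / |w + z| ≤ 0 := by
      have : (η⁻¹ - max |w| |z| - 1) / |w + z| ≤ -1 := by
        rw [div_le_iff₀ habs]
        linarith
      linarith
    rw [Υ, if_pos harg, mul_zero]

lemma phi0_formula {η w z : ℝ} (hε0 : 0 < η⁻¹) (hε : η⁻¹ ≤ 1/2) (hw0 : 0 ≤ w)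
    (hza : 1 - η⁻¹ ≤ z) (hz1 : z ≤ 1) :
    Φ₀ η w z = (6 / π ^ 2) * (max (min w z - (1 - η⁻¹)) 0 / (w + z)) := by
  have hz0 : (0:ℝ) < z := by linarith
  have hwz : 0 < w + z := by linarith
  unfold Φ₀
  rw [if_pos (ne_of_gt hwz), abs_of_nonneg hw0, abs_of_nonneg hz0.le,
    abs_of_nonneg hwz.le]
  have hsum : max w z + min w z = w + z := max_add_min w z
  have hA : 1 + (η⁻¹ - max w z - 1) / (w + z) = (min w z - (1 - η⁻¹)) / (w + z) := by
    rw [eq_div_iff hwz.ne', add_mul, one_mul, div_mul_cancel₀ _ hwz.ne']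
    linarith
  rw [hA]
  have hA1 : (min w z - (1 - η⁻¹)) / (w + z) < 1 := by
    rw [div_lt_one hwz]
    have := le_max_right w z
    linarith
  rw [upsilon_max hA1, ← max_div_div_right hwz.le, zero_div]

lemma phi0_neg (η w z : ℝ) : Φ₀ η (-w) (-z) = Φ₀ η w z := by
  unfold Φ₀
  simp only [show -w + -z = -(w+z) from by ring, abs_neg, ne_eq, neg_eq_zero]

lemma pi_sq_pos : (0:ℝ) < π ^ 2 := by positivity

/-- value of the comparison integral -/
lemma psi_integral {w c : ℝ} (hc : 0 < c) (hc2 : c ≤ 1/2) (hw0 : 0 ≤ w) (hw1 : w < 1) :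
    (∫ z in (-1:ℝ)..1, 3 / π ^ 2 * max (min w z - (1 - c)) 0)
      = 3 / (2 * π ^ 2) * max (c ^ 2 - (1 - w) ^ 2) 0 := by
  have hψc : Continuous (fun z : ℝ => 3 / π ^ 2 * max (min w z - (1 - c)) 0) := by
    apply continuous_const.mul
    exact ((continuous_const.min continuous_id).sub continuous_const).max continuous_const
  rcases le_or_gt w (1 - c) with hwa | hwa
  · have hval : (∫ z in (-1:ℝ)..1, 3 / π ^ 2 * max (min w z - (1 - c)) 0) = 0 := by
      rw [intervalIntegral.integral_congr (g := fun _ => (0:ℝ))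
        (fun z _ => by
          dsimp only
          rw [max_eq_right (by
            have : min w z ≤ w := min_le_left _ _
            linarith), mul_zero])]
      simp
    rw [hval, max_eq_right, mul_zero]
    nlinarith
  · have hint_aw : (∫ z in (1-c)..w, 3 / π ^ 2 * max (min w z - (1 - c)) 0)
        = 3 / π ^ 2 * ((w^2 - (1-c)^2)/2 - (w - (1-c)) * (1-c)) := by
      rw [intervalIntegral.integral_congr (g := fun z => 3 / π ^ 2 * (z - (1-c)))
        (by
          rw [uIcc_of_le hwa.le]
          intro z hz
          dsimp only
          rw [min_eq_right hz.2, max_eq_left (by linarith [hz.1])])]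
      rw [intervalIntegral.integral_const_mul,
        intervalIntegral.integral_sub intervalIntegral.intervalIntegrable_id
          intervalIntegrable_const,
        integral_id, intervalIntegral.integral_const, smul_eq_mul]
    have hint_w1 : (∫ z in w..1, 3 / π ^ 2 * max (min w z - (1 - c)) 0)
        = (1 - w) * (3 / π ^ 2 * (w - (1-c))) := by
      rw [intervalIntegral.integral_congr (g := fun _ => 3 / π ^ 2 * (w - (1-c)))
        (by
          rw [uIcc_of_le hw1.le]
          intro z hz
          dsimp only
          rw [min_eq_left hz.1, max_eq_left (by linarith)])]
      rw [intervalIntegral.integral_const, smul_eq_mul]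
    have hzeroψ : (∫ z in (-1:ℝ)..(1-c), 3 / π ^ 2 * max (min w z - (1 - c)) 0) = 0 := by
      rw [intervalIntegral.integral_congr (g := fun _ => (0:ℝ))
        (by
          rw [uIcc_of_le (by linarith : (-1:ℝ) ≤ 1 - c)]
          intro z hz
          dsimp only
          have : min w z ≤ 1 - c := le_trans (min_le_right _ _) hz.2
          rw [max_eq_right (by linarith), mul_zero])]
      simp
    have hsplit2 : (∫ z in (1-c)..1, 3 / π ^ 2 * max (min w z - (1 - c)) 0)
        = (∫ z in (1-c)..w, 3 / π ^ 2 * max (min w z - (1 - c)) 0)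
          + ∫ z in w..1, 3 / π ^ 2 * max (min w z - (1 - c)) 0 :=
      (intervalIntegral.integral_add_adjacent_intervals
        (hψc.intervalIntegrable _ _) (hψc.intervalIntegrable _ _)).symm
    have hsplit1 : (∫ z in (-1:ℝ)..1, 3 / π ^ 2 * max (min w z - (1 - c)) 0)
        = (∫ z in (-1:ℝ)..(1-c), 3 / π ^ 2 * max (min w z - (1 - c)) 0)
          + ∫ z in (1-c)..1, 3 / π ^ 2 * max (min w z - (1 - c)) 0 :=
      (intervalIntegral.integral_add_adjacent_intervals
        (hψc.intervalIntegrable _ _) (hψc.intervalIntegrable _ _)).symm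
    rw [hsplit1, hzeroψ, zero_add, hsplit2, hint_aw, hint_w1]
    rw [max_eq_left (by nlinarith)]
    have hπ := pi_sq_pos
    field_simp
    ring

lemma inner_bound {η w : ℝ} (hη : 2 ≤ η) (hw0 : 0 ≤ w) (hw1 : w < 1) :
    |(∫ z in (-1:ℝ)..1, Φ₀ η w z) - 3 / (2 * π ^ 2) * max (η⁻¹ ^ 2 - (1 - w) ^ 2) 0|
      ≤ 6 / π ^ 2 * η⁻¹ ^ 3 := by
  have hη0 : (0:ℝ) < η := by linarith
  have hε0 : 0 < η⁻¹ := inv_pos.mpr hη0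
  have hε : η⁻¹ ≤ 1/2 := by
    rw [inv_le_comm₀ hη0 (by norm_num)]
    linarith
  have hψc : Continuous (fun z : ℝ => 3 / π ^ 2 * max (min w z - (1 - η⁻¹)) 0) := by
    apply continuous_const.mul
    exact ((continuous_const.min continuous_id).sub continuous_const).max continuous_const
  -- interval integrability of Φ₀ on the two pieces
  have hint1 : IntervalIntegrable (fun z => Φ₀ η w z) volume (-1) (1 - η⁻¹) := by
    apply ContinuousOn.intervalIntegrable
    rw [uIcc_of_le (by linarith)]
    exact continuousOn_const.congr fun z hz => phi0_zero hε hw0 hz.2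
  have hint2 : IntervalIntegrable (fun z => Φ₀ η w z) volume (1 - η⁻¹) 1 := by
    apply ContinuousOn.intervalIntegrable
    rw [uIcc_of_le (by linarith)]
    have hcon : ContinuousOn
        (fun z => (6 / π ^ 2) * (max (min w z - (1 - η⁻¹)) 0 / (w + z))) (Icc (1 - η⁻¹) 1) := by
      apply continuousOn_const.mul
      apply ContinuousOn.div
      · exact (((continuous_const.min continuous_id).sub continuous_const).max
          continuous_const).continuousOn
      · exact (continuous_const.add continuous_id).continuousOn
      · intro z hz
        have h1 : 1 - η⁻¹ ≤ z := hz.1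
        have : 0 < w + z := by linarith
        exact this.ne'
    exact hcon.congr fun z hz => phi0_formula hε0 hε hw0 hz.1 hz.2
  -- the zero pieces
  have hzero1 : (∫ z in (-1:ℝ)..(1 - η⁻¹), Φ₀ η w z) = 0 := by
    rw [intervalIntegral.integral_congr (g := fun _ => (0:ℝ))
      (by
        rw [uIcc_of_le (by linarith : (-1:ℝ) ≤ 1 - η⁻¹)]
        exact fun z hz => phi0_zero hε hw0 hz.2)]
    simp
  have hzeroψ : (∫ z in (-1:ℝ)..(1 - η⁻¹), 3 / π ^ 2 * max (min w z - (1 - η⁻¹)) 0) = 0 := by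
    rw [intervalIntegral.integral_congr (g := fun _ => (0:ℝ))
      (by
        rw [uIcc_of_le (by linarith : (-1:ℝ) ≤ 1 - η⁻¹)]
        intro z hz
        dsimp only
        have : min w z ≤ 1 - η⁻¹ := le_trans (min_le_right _ _) hz.2
        rw [max_eq_right (by linarith), mul_zero])]
    simp
  -- pointwise bound on the difference over (1-η⁻¹, 1]
  have hptwise : ∀ z ∈ Set.Ioc (1 - η⁻¹) 1,
      |Φ₀ η w z - 3 / π ^ 2 * max (min w z - (1 - η⁻¹)) 0| ≤ 6 / π ^ 2 * η⁻¹ ^ 2 := by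
    intro z hz
    have hza : 1 - η⁻¹ < z := hz.1
    have hz1 : z ≤ 1 := hz.2
    have hform := phi0_formula hε0 hε hw0 hza.le hz1
    have hwz0 : 0 < w + z := by linarith
    have hdiff : Φ₀ η w z - 3 / π ^ 2 * max (min w z - (1 - η⁻¹)) 0
        = 6 / π ^ 2 * (max (min w z - (1 - η⁻¹)) 0 * (2 - (w + z)) / (2 * (w + z))) := by
      rw [hform]
      have hπ := pi_sq_pos
      field_simp
      ring
    rw [hdiff]
    rcases le_or_gt (min w z - (1 - η⁻¹)) 0 with hcs | hcs
    · rw [max_eq_right hcs]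
      simp [abs_of_nonneg, le_of_lt hε0]
      positivity
    · have hwa : 1 - η⁻¹ < w := (lt_min_iff.mp (by linarith : 1 - η⁻¹ < min w z)).1
      rw [max_eq_left hcs.le]
      have hm : min w z - (1 - η⁻¹) ≤ η⁻¹ := by
        have := min_le_right w z
        linarith
      have hwz1 : 1 ≤ w + z := by linarith
      have h2 : 2 - (w + z) ≤ 2 * η⁻¹ := by linarith
      have h2' : 0 ≤ 2 - (w + z) := by linarith
      rw [abs_of_nonneg (by
        apply mul_nonneg (by positivity)
        apply div_nonneg (mul_nonneg (by linarith) h2') (by linarith))]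
      have hfrac : (min w z - (1 - η⁻¹)) * (2 - (w + z)) / (2 * (w + z)) ≤ η⁻¹ ^ 2 := by
        rw [div_le_iff₀ (by linarith)]
        nlinarith
      exact mul_le_mul_of_nonneg_left hfrac (by positivity)
  -- assemble
  have hsplitΦ : (∫ z in (-1:ℝ)..1, Φ₀ η w z)
      = (∫ z in (-1:ℝ)..(1 - η⁻¹), Φ₀ η w z) + ∫ z in (1 - η⁻¹)..1, Φ₀ η w z :=
    (intervalIntegral.integral_add_adjacent_intervals hint1 hint2).symm
  have hsplitψ : (∫ z in (-1:ℝ)..1, 3 / π ^ 2 * max (min w z - (1 - η⁻¹)) 0)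
      = (∫ z in (-1:ℝ)..(1 - η⁻¹), 3 / π ^ 2 * max (min w z - (1 - η⁻¹)) 0)
        + ∫ z in (1 - η⁻¹)..1, 3 / π ^ 2 * max (min w z - (1 - η⁻¹)) 0 :=
    (intervalIntegral.integral_add_adjacent_intervals
      (hψc.intervalIntegrable _ _) (hψc.intervalIntegrable _ _)).symm
  have hkey : (∫ z in (-1:ℝ)..1, Φ₀ η w z) - 3 / (2 * π ^ 2) * max (η⁻¹ ^ 2 - (1 - w) ^ 2) 0
      = ∫ z in (1 - η⁻¹)..1, (Φ₀ η w z - 3 / π ^ 2 * max (min w z - (1 - η⁻¹)) 0) := by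
    rw [← psi_integral hε0 hε hw0 hw1, hsplitΦ, hsplitψ, hzero1, hzeroψ, zero_add, zero_add,
      intervalIntegral.integral_sub hint2 (hψc.intervalIntegrable _ _)]
  rw [hkey]
  have hb := intervalIntegral.norm_integral_le_of_norm_le_const
    (f := fun z => Φ₀ η w z - 3 / π ^ 2 * max (min w z - (1 - η⁻¹)) 0)
    (a := 1 - η⁻¹) (b := 1) (C := 6 / π ^ 2 * η⁻¹ ^ 2)
    (by
      intro x hx
      rw [uIoc_of_le (by linarith : 1 - η⁻¹ ≤ 1)] at hx
      simpa using hptwise x hx)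
  rw [Real.norm_eq_abs] at hb
  refine le_trans hb (le_of_eq ?_)
  rw [show (1:ℝ) - (1 - η⁻¹) = η⁻¹ by ring, abs_of_nonneg hε0.le]
  ring

lemma inner_bound' {η w : ℝ} (hη : 2 ≤ η) (hw : w ∈ Ioo (-1:ℝ) 1) :
    |(∫ z in (-1:ℝ)..1, Φ₀ η w z) - 3 / (2 * π ^ 2) * max (η⁻¹ ^ 2 - (1 - |w|) ^ 2) 0|
      ≤ 6 / π ^ 2 * η⁻¹ ^ 3 := by
  rcases le_or_gt 0 w with h | h
  · rw [abs_of_nonneg h]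
    exact inner_bound hη h hw.2
  · have h1 : (∫ z in (-1:ℝ)..1, Φ₀ η (-w) (-z)) = ∫ z in (-1:ℝ)..1, Φ₀ η (-w) z := by
      have h2 := intervalIntegral.integral_comp_neg (a := (-1:ℝ)) (b := 1) (fun z => Φ₀ η (-w) z)
      simpa using h2
    have heq : (∫ z in (-1:ℝ)..1, Φ₀ η w z) = ∫ z in (-1:ℝ)..1, Φ₀ η (-w) z := by
      rw [← h1]
      exact intervalIntegral.integral_congr fun z _ => (phi0_neg η w z).symm
    rw [heq, abs_of_neg h]
    exact inner_bound hη (by linarith) (by linarith [hw.1])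

lemma phi0_measurable (w : ℝ) : Measurable (fun p : ℝ × ℝ => Φ₀ p.1 w p.2) := by
  have hΥ : Measurable Υ := by
    unfold Υ
    exact Measurable.ite (measurableSet_le measurable_id measurable_const) measurable_const
      (Measurable.ite (measurableSet_lt measurable_id measurable_const) measurable_id
        measurable_const)
  unfold Φ₀
  apply Measurable.ite
  · exact (measurableSet_eq_fun (measurable_const.add measurable_snd) measurable_const).compl
  · apply measurable_const.mul
    apply hΥ.comp
    apply Measurable.add measurable_const
    apply Measurable.div
    · exact ((measurable_fst.inv.sub (measurable_const.max measurable_snd.abs)).sub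
        measurable_const)
    · exact (measurable_const.add measurable_snd).abs
  · exact Measurable.ite (measurableSet_lt measurable_fst.inv measurable_const)
      measurable_const measurable_const

lemma h_sm (w : ℝ) : StronglyMeasurable (fun η => ∫ z in (-1:ℝ)..1, Φ₀ η w z) := by
  have heq : (fun η => ∫ z in (-1:ℝ)..1, Φ₀ η w z)
      = fun η => ∫ z in Ioc (-1:ℝ) 1, Φ₀ η w z := by
    funext η
    exact intervalIntegral.integral_of_le (by norm_num)
  rw [heq]
  exact (phi0_measurable w).stronglyMeasurable.integral_prod_right'

lemma g_integral {ξ δ : ℝ} (hξ0 : 0 < ξ) (hδ0 : 0 < δ) :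
    IntegrableOn (fun η => 3 / (2 * π ^ 2) * max (η⁻¹ ^ 2 - δ ^ 2) 0) (Ioi ξ) ∧
    (∫ η in Ioi ξ, 3 / (2 * π ^ 2) * max (η⁻¹ ^ 2 - δ ^ 2) 0)
      = if ξ * δ < 1 then 3 / (2 * π ^ 2) * (1 - ξ * δ) ^ 2 * ξ⁻¹ else 0 := by
  rcases lt_or_ge (ξ * δ) 1 with hu | hu
  · have hb : ξ < 1 / δ := (lt_div_iff₀ hδ0).mpr (by linarith)
    have hb0 : 0 < 1 / δ := by positivity
    have hzero : EqOn (fun η : ℝ => 3 / (2 * π ^ 2) * max (η⁻¹ ^ 2 - δ ^ 2) 0)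
        (fun _ => (0:ℝ)) (Ioi (1 / δ)) := by
      intro η hη
      have hη0 : 0 < η := lt_trans hb0 hη
      have h1 : η⁻¹ < δ := by
        rw [inv_lt_comm₀ hη0 hδ0, ← one_div]
        exact hη
      have h2 : 0 < η⁻¹ := inv_pos.mpr hη0
      dsimp only
      rw [max_eq_right (by nlinarith), mul_zero]
    have hgIoi : IntegrableOn (fun η : ℝ => 3 / (2 * π ^ 2) * max (η⁻¹ ^ 2 - δ ^ 2) 0)
        (Ioi (1 / δ)) :=
      (integrableOn_congr_fun hzero measurableSet_Ioi).mpr (integrableOn_zero)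
    have hcont : ContinuousOn (fun η : ℝ => 3 / (2 * π ^ 2) * max (η⁻¹ ^ 2 - δ ^ 2) 0)
        (Icc ξ (1 / δ)) := by
      apply continuousOn_const.mul
      exact (continuous_id.max continuous_const).comp_continuousOn
        (((ContinuousOn.inv₀ continuous_id.continuousOn
          fun x hx => (lt_of_lt_of_le hξ0 hx.1).ne').pow 2).sub continuousOn_const)
    have hgIoc : IntegrableOn (fun η : ℝ => 3 / (2 * π ^ 2) * max (η⁻¹ ^ 2 - δ ^ 2) 0)
        (Ioc ξ (1 / δ)) :=
      (hcont.integrableOn_Icc).mono_set Ioc_subset_Icc_self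
    have hsplit : Ioi ξ = Ioc ξ (1 / δ) ∪ Ioi (1 / δ) := (Ioc_union_Ioi_eq_Ioi hb.le).symm
    constructor
    · rw [hsplit]; exact hgIoc.union hgIoi
    · rw [hsplit, setIntegral_union (Ioc_disjoint_Ioi le_rfl) measurableSet_Ioi hgIoc hgIoi,
        setIntegral_congr_fun measurableSet_Ioi hzero, integral_zero, add_zero]
      have hEq2 : EqOn (fun η : ℝ => 3 / (2 * π ^ 2) * max (η⁻¹ ^ 2 - δ ^ 2) 0)
          (fun η : ℝ => 3 / (2 * π ^ 2) * (η⁻¹ ^ 2 - δ ^ 2)) (Ioc ξ (1 / δ)) := by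
        intro η hη
        have hη0 : 0 < η := lt_trans hξ0 hη.1
        have h1 : δ ≤ η⁻¹ := by
          rw [le_inv_comm₀ hδ0 hη0, ← one_div]
          exact hη.2
        dsimp only
        rw [max_eq_left (by nlinarith)]
      rw [setIntegral_congr_fun measurableSet_Ioc hEq2, ← intervalIntegral.integral_of_le hb.le]
      have hFTC := intervalIntegral.integral_eq_sub_of_hasDerivAt
        (f := fun η : ℝ => 3 / (2 * π ^ 2) * (-η⁻¹ - δ ^ 2 * η))
        (f' := fun η : ℝ => 3 / (2 * π ^ 2) * (η⁻¹ ^ 2 - δ ^ 2)) (a := ξ) (b := 1 / δ)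
        (by
          intro η hη
          rw [uIcc_of_le hb.le] at hη
          have hη0 : 0 < η := lt_of_lt_of_le hξ0 hη.1
          have hd : HasDerivAt (fun η : ℝ => -η⁻¹ - δ ^ 2 * η) (η⁻¹ ^ 2 - δ ^ 2) η := by
            have h1 : HasDerivAt (fun η : ℝ => η⁻¹) (-(η ^ 2)⁻¹) η := hasDerivAt_inv hη0.ne'
            have h2 : HasDerivAt (fun η : ℝ => δ ^ 2 * η) (δ ^ 2) η := by
              simpa using (hasDerivAt_id η).const_mul (δ ^ 2)
            have h3 := (h1.neg).sub h2
            refine h3.congr_deriv ?_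
            rw [← inv_pow]
            ring
          exact hd.const_mul (3 / (2 * π ^ 2)))
        (by
          apply ContinuousOn.intervalIntegrable
          rw [uIcc_of_le hb.le]
          exact continuousOn_const.mul
            (((ContinuousOn.inv₀ continuous_id.continuousOn
              fun x hx => (lt_of_lt_of_le hξ0 hx.1).ne').pow 2).sub
              continuousOn_const))
      rw [hFTC, if_pos hu]
      have hπ := pi_sq_pos
      have hδ' : δ ≠ 0 := hδ0.ne'
      have hξ' : ξ ≠ 0 := hξ0.ne'
      field_simp
      ring
  · have hzero : EqOn (fun η : ℝ => 3 / (2 * π ^ 2) * max (η⁻¹ ^ 2 - δ ^ 2) 0)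
        (fun _ => (0:ℝ)) (Ioi ξ) := by
      intro η hη
      have hη0 : 0 < η := lt_trans hξ0 hη
      have h1 : η⁻¹ < ξ⁻¹ := by
        rw [inv_lt_inv₀ hη0 hξ0]
        exact hη
      have h2 : ξ⁻¹ ≤ δ := by
        rw [inv_le_comm₀ hξ0 hδ0]
        have hi2 : δ⁻¹ * (ξ * δ) = ξ := by field_simp
        have hle := mul_le_mul_of_nonneg_left hu (inv_pos.mpr hδ0).le
        linarith [hle, hi2]
      have h3 : 0 < η⁻¹ := inv_pos.mpr hη0
      dsimp only
      rw [max_eq_right (by nlinarith), mul_zero]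
    constructor
    · exact (integrableOn_congr_fun hzero measurableSet_Ioi).mpr (integrableOn_zero)
    · rw [setIntegral_congr_fun measurableSet_Ioi hzero, integral_zero, if_neg (not_lt.mpr hu)]

lemma D_integral {ξ : ℝ} (hξ0 : 0 < ξ) :
    IntegrableOn (fun η : ℝ => 6 / π ^ 2 * η⁻¹ ^ 3) (Ioi ξ) ∧
    (∫ η in Ioi ξ, 6 / π ^ 2 * η⁻¹ ^ 3) = 3 / π ^ 2 * ξ⁻¹ ^ 2 := by
  have hπ := pi_sq_pos
  have hderiv : ∀ η ∈ Ioi ξ, HasDerivAt (fun η : ℝ => -(3 / π ^ 2) * (η ^ 2)⁻¹)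
      (6 / π ^ 2 * η⁻¹ ^ 3) η := by
    intro η hη
    have hη0 : 0 < η := lt_trans hξ0 hη
    have h1 : HasDerivAt (fun η : ℝ => (η ^ 2)⁻¹) (-(↑2 * η ^ (2 - 1)) / (η ^ 2) ^ 2) η :=
      (hasDerivAt_pow 2 η).inv (by positivity)
    have h2 := h1.const_mul (-(3 / π ^ 2))
    refine h2.congr_deriv ?_
    field_simp
    ring
  have hcont : ContinuousWithinAt (fun η : ℝ => -(3 / π ^ 2) * (η ^ 2)⁻¹) (Ici ξ) ξ := by
    apply ContinuousAt.continuousWithinAt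
    exact continuousAt_const.mul ((continuousAt_id.pow 2).inv₀ (pow_ne_zero 2 hξ0.ne'))
  have hnonneg : ∀ η ∈ Ioi ξ, 0 ≤ 6 / π ^ 2 * η⁻¹ ^ 3 := by
    intro η hη
    have : 0 < η := lt_trans hξ0 hη
    positivity
  have htend : Filter.Tendsto (fun η : ℝ => -(3 / π ^ 2) * (η ^ 2)⁻¹) Filter.atTop (nhds 0) := by
    have h1 : Filter.Tendsto (fun η : ℝ => (η ^ 2)⁻¹) Filter.atTop (nhds 0) := by
      apply Filter.Tendsto.inv_tendsto_atTop
      exact Filter.tendsto_pow_atTop two_ne_zero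
    have h2 := h1.const_mul (-(3 / π ^ 2))
    simpa using h2
  refine ⟨integrableOn_Ioi_deriv_of_nonneg hcont hderiv hnonneg htend, ?_⟩
  rw [integral_Ioi_of_hasDerivAt_of_nonneg hcont hderiv hnonneg htend]
  rw [← inv_pow]
  ring

noncomputable def Φ (ξ w : ℝ) : ℝ := ∫ η in Ioi ξ, ∫ z in (-1 : ℝ)..1, Φ₀ η w z

/-- The main asymptotic term of `Φ(ξ,w)` as `ξ → ∞`. -/
noncomputable def E₂ (ξ w : ℝ) : ℝ :=
  if ξ * (1 - |w|) < 1 then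
    (3 / (2 * π ^ 2)) * (1 - ξ * (1 - |w|)) ^ 2 * ξ⁻¹
  else 0

/-- Uniform asymptotics: `Φ(ξ,w) = E₂(ξ,w) + O(ξ⁻²)` as `ξ → ∞`, uniformly in
`w ∈ (−1,1)`. -/
theorem stmt17 :
    ∃ C : ℝ, 0 < C ∧ ∀ ξ w : ℝ, 2 ≤ ξ → w ∈ Ioo (-1 : ℝ) 1 →
      |Φ ξ w - E₂ ξ w| ≤ C * ξ⁻¹ ^ 2 := by
  refine ⟨1, one_pos, fun ξ w hξ hw => ?_⟩
  have hξ0 : (0:ℝ) < ξ := by linarith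
  have hδ0 : 0 < 1 - |w| := by
    have : |w| < 1 := abs_lt.mpr ⟨hw.1, hw.2⟩
    linarith
  obtain ⟨hgInt, hgVal⟩ := g_integral hξ0 hδ0
  obtain ⟨hDInt, hDVal⟩ := D_integral hξ0
  have hE : E₂ ξ w = ∫ η in Ioi ξ, 3 / (2 * π ^ 2) * max (η⁻¹ ^ 2 - (1 - |w|) ^ 2) 0 := by
    rw [hgVal]
    unfold E₂
    norm_num
  have hbound : ∀ᵐ η ∂(volume.restrict (Ioi ξ)),
      ‖(∫ z in (-1:ℝ)..1, Φ₀ η w z) - 3 / (2 * π ^ 2) * max (η⁻¹ ^ 2 - (1 - |w|) ^ 2) 0‖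
        ≤ 6 / π ^ 2 * η⁻¹ ^ 3 := by
    rw [ae_restrict_iff' measurableSet_Ioi]
    exact ae_of_all _ fun η hη => by
      rw [Real.norm_eq_abs]
      exact inner_bound' (le_trans hξ (le_of_lt hη)) hw
  have hdiffInt : IntegrableOn (fun η => (∫ z in (-1:ℝ)..1, Φ₀ η w z)
      - 3 / (2 * π ^ 2) * max (η⁻¹ ^ 2 - (1 - |w|) ^ 2) 0) (Ioi ξ) := by
    apply Integrable.mono' hDInt
    · exact ((h_sm w).aestronglyMeasurable.restrict.sub hgInt.aestronglyMeasurable)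
    · exact hbound
  have hhInt : IntegrableOn (fun η => ∫ z in (-1:ℝ)..1, Φ₀ η w z) (Ioi ξ) := by
    have h1 := hdiffInt.add hgInt
    have h2 : ((fun η => (∫ z in (-1:ℝ)..1, Φ₀ η w z)
        - 3 / (2 * π ^ 2) * max (η⁻¹ ^ 2 - (1 - |w|) ^ 2) 0)
        + fun η => 3 / (2 * π ^ 2) * max (η⁻¹ ^ 2 - (1 - |w|) ^ 2) 0)
        = fun η => ∫ z in (-1:ℝ)..1, Φ₀ η w z := by
      funext η
      simp
    rwa [h2] at h1
  have hsub : Φ ξ w - E₂ ξ w = ∫ η in Ioi ξ, ((∫ z in (-1:ℝ)..1, Φ₀ η w z)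
      - 3 / (2 * π ^ 2) * max (η⁻¹ ^ 2 - (1 - |w|) ^ 2) 0) := by
    rw [integral_sub hhInt hgInt, hE]
    rfl
  rw [hsub]
  have hle := norm_integral_le_of_norm_le hDInt hbound
  rw [Real.norm_eq_abs] at hle
  refine le_trans hle ?_
  rw [hDVal]
  have h3 : (3:ℝ)/π^2 ≤ 1 := by
    rw [div_le_one pi_sq_pos]
    nlinarith [Real.pi_gt_three]
  have h4 : (0:ℝ) ≤ ξ⁻¹ ^ 2 := by positivity
  nlinarith
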